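/- If a local rule R : S^m → S is unbalanced (i.e., the preimage sizes |R^{-1}(s)| are not all equal to d^{m-1}), then for every n ≥ m the global function G_n under periodic boundary is not surjective (hence not bijective). -/

import Mathlib

/-- The global function of a 1-D cellular automaton with `d` states,
neighborhood size `m`, left radius `lr`, on a periodic lattice of size `n`. -/
def caGlobal (d m lr n : ℕ) (R : (Fin m → Fin d) → Fin d)
    (c : ZMod n → Fin d) : ZMod n → Fin d :=
  fun i => R fun k => c (i + ((k : ℕ) : ZMod n) - (lr : ZMod n))

open Classical in
noncomputable def splitEquiv {α β S : Type*} (e : α ↪ β) (P : (α → S) → Prop) :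
    {c : β → S // P (fun a => c (e a))} ≃
      {t : α → S // P t} × ({x : β // x ∉ Set.range e} → S) where
  toFun c := (⟨fun a => c.1 (e a), c.2⟩, fun x => c.1 x.1)
  invFun p := ⟨fun x => if h : ∃ a, e a = x then p.1.1 h.choose else p.2 ⟨x, fun hr => h hr⟩, by
    have key : (fun a => (fun x => if h : ∃ a, e a = x then p.1.1 h.choose
        else p.2 ⟨x, fun hr => h hr⟩) (e a)) = p.1.1 := by
      funext a
      have h : ∃ a', e a' = e a := ⟨a, rfl⟩
      simp only [dif_pos h]
      exact congrArg p.1.1 (e.injective h.choose_spec)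
    rw [key]; exact p.1.2⟩
  left_inv c := by
    ext x
    by_cases h : ∃ a, e a = x
    · simp only [dif_pos h]
      exact congrArg c.1 h.choose_spec
    · simp [dif_neg h]
  right_inv p := by
    refine Prod.ext (Subtype.ext ?_) ?_
    · funext a
      have h : ∃ a', e a' = e a := ⟨a, rfl⟩
      simp only [dif_pos h]
      exact congrArg p.1.1 (e.injective h.choose_spec)
    · funext x
      exact dif_neg (fun h => x.2 h)

open Classical in
lemma card_window {α β S : Type*} [Fintype α] [Fintype β] [Fintype S]
    (e : α ↪ β) (P : (α → S) → Prop) :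
    Nat.card {c : β → S // P (fun a => c (e a))} =
      Nat.card {t : α → S // P t} * Fintype.card S ^ (Fintype.card β - Fintype.card α) := by
  classical
  rw [Nat.card_congr (splitEquiv e P), Nat.card_prod]
  congr 1
  rw [Nat.card_eq_fintype_card, Fintype.card_fun]
  congr 1
  have : Fintype.card {x : β // x ∈ Set.range e} = Fintype.card α := by
    rw [Fintype.card_congr (Equiv.ofInjective e e.injective).symm]
  rw [Fintype.card_subtype_compl, this]

/-- If the local rule is unbalanced (some state does not have exactly
`d^(m-1)` preimages), then `Gₙ` is not surjective for any `n ≥ m`. -/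
theorem unbalanced_not_surjective
    (d m lr : ℕ) (R : (Fin m → Fin d) → Fin d)
    (hR : ¬ ∀ s : Fin d,
        (Finset.univ.filter (fun t : Fin m → Fin d => R t = s)).card = d ^ (m - 1)) :
    ∀ n : ℕ, m ≤ n → ¬ Function.Surjective (caGlobal d m lr n R) := by
  classical
  intro n hmn hsurj
  -- d > 0
  rcases Nat.eq_zero_or_pos d with hd | hd
  · exact hR (by subst hd; exact fun s => s.elim0)
  rcases Nat.eq_zero_or_pos m with hm | hm
  · -- m = 0 : the global map is constant
    subst hm
    push_neg at hR
    obtain ⟨s, hs⟩ := hR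
    have huniv : (Finset.univ : Finset (Fin 0 → Fin d)) = {default} := by
      apply Finset.eq_singleton_iff_unique_mem.mpr
      exact ⟨Finset.mem_univ _, fun x _ => Subsingleton.elim x default⟩
    have hs' : R default ≠ s := by
      intro h
      apply hs
      simp [huniv, Finset.filter_singleton, h]
    obtain ⟨c, hc⟩ := hsurj (fun _ => s)
    have := congrFun hc 0
    simp only [caGlobal] at this
    exact hs' ((congrArg R (Subsingleton.elim _ _)).trans this)
  -- main case : 1 ≤ m ≤ n
  have hn : 0 < n := lt_of_lt_of_le hm hmn
  have hexp : n - 1 = (m - 1) + (n - m) := by omega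
  haveI : NeZero n := ⟨hn.ne'⟩
  -- window embedding
  have hinj : Function.Injective (fun k : Fin m =>
      (0 : ZMod n) + ((k : ℕ) : ZMod n) - (lr : ZMod n)) := by
    intro k₁ k₂ h
    have h' : ((k₁ : ℕ) : ZMod n) = ((k₂ : ℕ) : ZMod n) := by
      simp only [zero_add, sub_left_inj] at h
      exact h
    have v1 := ZMod.val_natCast_of_lt (lt_of_lt_of_le k₁.isLt hmn)
    have v2 := ZMod.val_natCast_of_lt (lt_of_lt_of_le k₂.isLt hmn)
    exact Fin.ext (by rw [← v1, ← v2, h'])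
  set e : Fin m ↪ ZMod n := ⟨_, hinj⟩ with he
  have e0inj : Function.Injective (fun _ : Fin 1 => (0 : ZMod n)) := fun a b _ => Subsingleton.elim a b
  set e0 : Fin 1 ↪ ZMod n := ⟨_, e0inj⟩ with he0
  have hbij : Function.Bijective (caGlobal d m lr n R) :=
    Finite.surjective_iff_bijective.mp hsurj
  apply hR
  intro s
  -- count configurations with image value s at position 0
  have h1 : Nat.card {c : ZMod n → Fin d // caGlobal d m lr n R c 0 = s} =
      Nat.card {t : Fin m → Fin d // R t = s} * d ^ (n - m) := by
    have := card_window e (fun t : Fin m → Fin d => R t = s)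
    rw [ZMod.card, Fintype.card_fin, Fintype.card_fin] at this
    exact this
  have h2 : Nat.card {c : ZMod n → Fin d // caGlobal d m lr n R c 0 = s} =
      Nat.card {c : ZMod n → Fin d // c 0 = s} := by
    exact Nat.card_congr ((Equiv.ofBijective _ hbij).subtypeEquiv (fun c => Iff.rfl))
  have h3 : Nat.card {c : ZMod n → Fin d // c 0 = s} = d ^ (n - 1) := by
    have := card_window e0 (fun t : Fin 1 → Fin d => t 0 = s)
    have hone : Nat.card {t : Fin 1 → Fin d // t 0 = s} = 1 := by
      rw [Nat.card_eq_fintype_card, Fintype.card_eq_one_iff]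
      refine ⟨⟨fun _ => s, rfl⟩, ?_⟩
      rintro ⟨t, ht⟩
      apply Subtype.ext
      funext a
      show t a = s
      rw [Subsingleton.elim a 0]
      exact ht
    rw [ZMod.card, Fintype.card_fin, Fintype.card_fin, hone, one_mul] at this
    exact this
  have key : Nat.card {t : Fin m → Fin d // R t = s} * d ^ (n - m) =
      d ^ (m - 1) * d ^ (n - m) := by
    calc Nat.card {t : Fin m → Fin d // R t = s} * d ^ (n - m)
        = d ^ (n - 1) := (h1.symm.trans h2).trans h3
      _ = d ^ ((m - 1) + (n - m)) := by rw [hexp]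
      _ = d ^ (m - 1) * d ^ (n - m) := pow_add d _ _
  have hcard : Nat.card {t : Fin m → Fin d // R t = s} = d ^ (m - 1) :=
    Nat.eq_of_mul_eq_mul_right (Nat.pow_pos hd) key
  have hfin : (Finset.univ.filter (fun t : Fin m → Fin d => R t = s)).card =
      Fintype.card {t : Fin m → Fin d // R t = s} := (Fintype.card_subtype _).symm
  rw [hfin]
  rw [← Nat.card_eq_fintype_card]
  rw [hcard]
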